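/- Let A ⊂ ℝ be a finite set with |A| = n^{1/2} (n a perfect square) that is of SzT-type with parameter α = 2 and coefficient d > 0, and let k ≥ 1 be real. Then there is an absolute constant C > 0 such that the set {(a,b) ∈ A² : there exists c ∈ A with |(A − a) ∩ (A − b) ∩ (A − c)| ≥ k} — i.e., the image under the projection (a,b,c) ↦ (a,b) of the set of k-rich points of A³ — has cardinality at most C · d · n^{3/2} / k². -/

import Mathlib

open scoped Pointwise Classical

/-- `delta X Y s` is the number of representations of `s` as `x - y`, `x ∈ X`, `y ∈ Y`. -/
noncomputable def delta (X Y : Finset ℝ) (s : ℝ) : ℕ :=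
  ((X ×ˢ Y).filter fun p => p.1 - p.2 = s).card

/-- `X` is of Szemerédi–Trotter type with parameter `α = 2` and coefficient `d`. -/
def SzTType2 (X : Finset ℝ) (d : ℝ) : Prop :=
  ∀ (Y : Finset ℝ) (τ : ℝ), 1 ≤ τ →
    (((X - Y).filter fun s => τ ≤ (delta X Y s : ℝ)).card : ℝ)
      ≤ d * X.card * (Y.card : ℝ) ^ 2 / τ ^ 3

/-- The cardinality of `(A - a) ∩ (A - b) ∩ (A - c)`, realized as the set of
`z ∈ A - a` with `z + a, z + b, z + c ∈ A`. -/
noncomputable def tripleInterCard (A : Finset ℝ) (a b c : ℝ) : ℕ :=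
  (((A.image fun u => u - a).filter fun z =>
    z + a ∈ A ∧ z + b ∈ A ∧ z + c ∈ A)).card

lemma delta_le_card (A : Finset ℝ) (s : ℝ) : delta A A s ≤ A.card := by
  classical
  apply Finset.card_le_card_of_injOn Prod.fst
  · intro p hp
    rw [Finset.mem_coe, Finset.mem_filter, Finset.mem_product] at hp
    exact hp.1.1
  · intro p hp q hq h
    simp only [Finset.mem_coe, Finset.mem_filter] at hp hq
    have h2 : p.2 = q.2 := by
      have e1 := hp.2
      have e2 := hq.2
      linarith
    exact Prod.ext h h2

lemma triple_le_delta (A : Finset ℝ) (a b c : ℝ) :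
    tripleInterCard A a b c ≤ delta A A (a - b) := by
  classical
  unfold tripleInterCard delta
  apply Finset.card_le_card_of_injOn (fun z => (z + a, z + b))
  · intro z hz
    rw [Finset.mem_coe, Finset.mem_filter] at hz
    rw [Finset.mem_coe, Finset.mem_filter, Finset.mem_product]
    exact ⟨⟨hz.2.1, hz.2.2.1⟩, by simp⟩
  · intro z hz w hw h
    have h1 : z + a = w + a := congrArg Prod.fst h
    linarith

lemma tailsum (k : ℝ) (hk : 1 ≤ k) (m : ℕ) :
    ∑ t ∈ Finset.range m, (if k < (t:ℝ)+1 then (((t:ℝ)+1)^3)⁻¹ else 0)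
      ≤ 2/k^2 - (if k < (m:ℝ) then (k*(m:ℝ))⁻¹ else 0) := by
  have hk0 : (0:ℝ) < k := lt_of_lt_of_le one_pos hk
  induction m with
  | zero =>
    simp only [Finset.range_zero, Finset.sum_empty, Nat.cast_zero]
    rw [if_neg (by linarith : ¬ k < (0:ℝ)), sub_zero]
    positivity
  | succ m ih =>
    rw [Finset.sum_range_succ]
    push_cast
    by_cases h1 : k < (m:ℝ)
    · rw [if_pos h1] at ih
      have hm2 : (2:ℝ) ≤ (m:ℝ) := by
        have : (1:ℝ) < (m:ℝ) := lt_of_le_of_lt hk h1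
        have : 1 < m := by exact_mod_cast this
        exact_mod_cast this
      have h2 : k < (m:ℝ)+1 := h1.trans (by linarith)
      rw [if_pos h2, if_pos h2]
      have key : (((m:ℝ)+1)^3)⁻¹ ≤ (k*(m:ℝ))⁻¹ - (k*((m:ℝ)+1))⁻¹ := by
        have e : (k*(m:ℝ))⁻¹ - (k*((m:ℝ)+1))⁻¹ = (k*(m:ℝ)*((m:ℝ)+1))⁻¹ := by
          field_simp
          ring
        rw [e]
        apply inv_anti₀
        · positivity
        · have hh : k * (↑m * ((m:ℝ)+1)) ≤ (m:ℝ) * ((m:ℝ) * ((m:ℝ)+1)) :=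
            mul_le_mul_of_nonneg_right (le_of_lt h1) (by positivity)
          nlinarith [hh]
      linarith
    · by_cases h2 : k < (m:ℝ)+1
      · -- here m ≤ k < m+1; all previous terms vanish
        have hprev : ∑ t ∈ Finset.range m, (if k < (t:ℝ)+1 then (((t:ℝ)+1)^3)⁻¹ else 0) = 0 := by
          apply Finset.sum_eq_zero
          intro t ht
          rw [Finset.mem_range] at ht
          have : (t:ℝ)+1 ≤ (m:ℝ) := by exact_mod_cast Nat.succ_le_of_lt ht
          rw [if_neg (by push_neg at h1; linarith)]
        rw [hprev, if_pos h2, if_pos h2, zero_add]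
        push_neg at h1
        have hkm : k ≤ (m:ℝ)+1 := le_of_lt h2
        have hmn : (0:ℝ) ≤ (m:ℝ) := Nat.cast_nonneg m
        have hA : (((m:ℝ)+1)^3)⁻¹ ≤ (k^2)⁻¹ := by
          apply inv_anti₀ (by positivity)
          have hsq : k * k ≤ ((m:ℝ)+1) * ((m:ℝ)+1) :=
            mul_le_mul hkm hkm hk0.le (by linarith)
          nlinarith [hsq]
        have hB : (k*((m:ℝ)+1))⁻¹ ≤ (k^2)⁻¹ := by
          apply inv_anti₀ (by positivity)
          have := mul_le_mul_of_nonneg_left hkm hk0.le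
          nlinarith [this]
        have : 2/k^2 = (k^2)⁻¹ + (k^2)⁻¹ := by
          rw [div_eq_mul_inv]; ring
        linarith
      · have h1' : ¬ k < (m:ℝ) := h1
        rw [if_neg h1'] at ih
        rw [if_neg h2, if_neg h2, add_zero]
        linarith

theorem projection_of_rich_points :
    ∃ C : ℝ, 0 < C ∧ ∀ (n m : ℕ) (A : Finset ℝ) (d k : ℝ),
      n = m ^ 2 → A.card = m → 0 < d → SzTType2 A d → 1 ≤ k →
      (((A ×ˢ A).filter fun p =>
          ∃ c ∈ A, k ≤ (tripleInterCard A p.1 p.2 c : ℝ)).card : ℝ)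
        ≤ C * d * (n : ℝ) ^ ((3 : ℝ) / 2) / k ^ 2 := by
  classical
  refine ⟨3, by norm_num, ?_⟩
  intro n m A d k hn hm hd hSzT hk
  have hk0 : (0:ℝ) < k := lt_of_lt_of_le one_pos hk
  set S : Finset ℝ := (A - A).filter (fun s => k ≤ (delta A A s : ℝ)) with hS
  have hmδ : ∀ s, delta A A s ≤ m := fun s => hm ▸ delta_le_card A s
  -- Step 1: project to pairs with large delta
  have step1 :
      ((A ×ˢ A).filter fun p => ∃ c ∈ A, k ≤ (tripleInterCard A p.1 p.2 c : ℝ)).card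
        ≤ ((A ×ˢ A).filter fun p => k ≤ (delta A A (p.1 - p.2) : ℝ)).card := by
    apply Finset.card_le_card
    intro p hp
    rw [Finset.mem_filter] at hp ⊢
    obtain ⟨hpA, c, _, hkc⟩ := hp
    refine ⟨hpA, le_trans hkc ?_⟩
    exact_mod_cast triple_le_delta A p.1 p.2 c
  -- Step 2: fiberwise counting
  have hmem : ∀ p ∈ (A ×ˢ A).filter fun p => k ≤ (delta A A (p.1 - p.2) : ℝ),
      p.1 - p.2 ∈ S := by
    intro p hp
    rw [Finset.mem_filter] at hp
    have hpA := hp.1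
    rw [Finset.mem_product] at hpA
    rw [hS, Finset.mem_filter]
    exact ⟨Finset.sub_mem_sub hpA.1 hpA.2, hp.2⟩
  have step2 : ((A ×ˢ A).filter fun p => k ≤ (delta A A (p.1 - p.2) : ℝ)).card
      ≤ ∑ s ∈ S, delta A A s := by
    rw [Finset.card_eq_sum_card_fiberwise hmem]
    apply Finset.sum_le_sum
    intro s _
    apply Finset.card_le_card
    intro p hp
    simp only [Finset.mem_filter] at hp ⊢
    exact ⟨hp.1.1, hp.2⟩
  -- Step 3: layer cake
  have step3 : ∑ s ∈ S, delta A A s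
      = ∑ t ∈ Finset.range m, (S.filter fun s => t < delta A A s).card := by
    have h1 : ∀ s ∈ S, delta A A s
        = ∑ t ∈ Finset.range m, if t < delta A A s then 1 else 0 := by
      intro s _
      rw [← Finset.card_filter]
      have he : (Finset.range m).filter (fun t => t < delta A A s)
          = Finset.range (delta A A s) := by
        ext t
        simp only [Finset.mem_filter, Finset.mem_range]
        have := hmδ s
        omega
      rw [he, Finset.card_range]
    rw [Finset.sum_congr rfl h1, Finset.sum_comm]
    exact Finset.sum_congr rfl fun t _ => (Finset.card_filter _ _).symm
  -- Step 4: SzT bound per level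
  have step4 : ∀ t ∈ Finset.range m, ((S.filter fun s => t < delta A A s).card : ℝ)
      ≤ d * (m:ℝ) * (m:ℝ)^2 * ((max k ((t:ℝ)+1))^3)⁻¹ := by
    intro t _
    have hτ : 1 ≤ max k ((t:ℝ)+1) := le_trans hk (le_max_left _ _)
    have hsub : (S.filter fun s => t < delta A A s)
        ⊆ (A - A).filter fun s => max k ((t:ℝ)+1) ≤ (delta A A s : ℝ) := by
      intro s hs
      simp only [hS, Finset.mem_filter] at hs ⊢
      refine ⟨hs.1.1, max_le hs.1.2 ?_⟩
      have ht' : t + 1 ≤ delta A A s := hs.2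
      exact_mod_cast ht'
    calc ((S.filter fun s => t < delta A A s).card : ℝ)
        ≤ (((A - A).filter fun s => max k ((t:ℝ)+1) ≤ (delta A A s : ℝ)).card : ℝ) := by
          exact_mod_cast Finset.card_le_card hsub
      _ ≤ d * A.card * (A.card : ℝ)^2 / (max k ((t:ℝ)+1))^3 := hSzT A _ hτ
      _ = d * (m:ℝ) * (m:ℝ)^2 * ((max k ((t:ℝ)+1))^3)⁻¹ := by
          rw [hm, div_eq_mul_inv]
  -- Step 5: sum the levels
  have sumτ : ∑ t ∈ Finset.range m, ((max k ((t:ℝ)+1))^3)⁻¹ ≤ 3 / k^2 := by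
    have hsplit : ∀ t ∈ Finset.range m, ((max k ((t:ℝ)+1))^3)⁻¹ =
        (if (t:ℝ)+1 ≤ k then (k^3)⁻¹ else 0)
          + (if k < (t:ℝ)+1 then (((t:ℝ)+1)^3)⁻¹ else 0) := by
      intro t _
      by_cases h : (t:ℝ)+1 ≤ k
      · rw [max_eq_left h, if_pos h, if_neg (not_lt.2 h), add_zero]
      · rw [max_eq_right (le_of_lt (not_le.1 h)), if_neg h, if_pos (not_le.1 h), zero_add]
    rw [Finset.sum_congr rfl hsplit, Finset.sum_add_distrib]
    have part1 : ∑ t ∈ Finset.range m, (if (t:ℝ)+1 ≤ k then (k^3)⁻¹ else 0) ≤ 1/k^2 := by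
      have he : ∑ t ∈ Finset.range m, (if (t:ℝ)+1 ≤ k then (k^3)⁻¹ else 0)
          = (((Finset.range m).filter fun t : ℕ => (t:ℝ)+1 ≤ k).card : ℝ) * (k^3)⁻¹ := by
        have := (Finset.sum_filter (s := Finset.range m) (fun t : ℕ => (t:ℝ)+1 ≤ k)
          (fun _ : ℕ => (k^3)⁻¹)).symm
        rw [this, Finset.sum_const, nsmul_eq_mul]
      have hsub2 : ((Finset.range m).filter fun t : ℕ => (t:ℝ)+1 ≤ k) ⊆ Finset.range (Nat.floor k) := by
        intro t ht
        simp only [Finset.mem_filter, Finset.mem_range] at ht ⊢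
        have : ((t+1 : ℕ) : ℝ) ≤ k := by push_cast; linarith [ht.2]
        have := Nat.le_floor this
        omega
      have hcard : (((Finset.range m).filter fun t : ℕ => (t:ℝ)+1 ≤ k).card : ℝ) ≤ k := by
        calc (((Finset.range m).filter fun t : ℕ => (t:ℝ)+1 ≤ k).card : ℝ)
            ≤ ((Finset.range (Nat.floor k)).card : ℝ) := by
              exact_mod_cast Finset.card_le_card hsub2
          _ = (Nat.floor k : ℝ) := by rw [Finset.card_range]
          _ ≤ k := Nat.floor_le hk0.le
      rw [he]
      have hkk : k * (k^3)⁻¹ = 1/k^2 := by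
        field_simp
      calc (((Finset.range m).filter fun t : ℕ => (t:ℝ)+1 ≤ k).card : ℝ) * (k^3)⁻¹
          ≤ k * (k^3)⁻¹ := by
            apply mul_le_mul_of_nonneg_right hcard (by positivity)
        _ = 1/k^2 := hkk
    have part2 : ∑ t ∈ Finset.range m, (if k < (t:ℝ)+1 then (((t:ℝ)+1)^3)⁻¹ else 0)
        ≤ 2/k^2 := by
      have := tailsum k hk m
      have hind : (0:ℝ) ≤ (if k < (m:ℝ) then (k*(m:ℝ))⁻¹ else 0) := by positivity
      linarith
    have hfin : 1/k^2 + 2/k^2 = 3/k^2 := by ring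
    linarith
  -- n^(3/2) = m^3
  have hn' : (n:ℝ) ^ ((3:ℝ)/2) = (m:ℝ)^3 := by
    subst hn
    push_cast
    rw [← Real.rpow_natCast (m:ℝ) 2, ← Real.rpow_mul (Nat.cast_nonneg m),
      ← Real.rpow_natCast (m:ℝ) 3]
    norm_num
  -- Final assembly
  calc (((A ×ˢ A).filter fun p =>
          ∃ c ∈ A, k ≤ (tripleInterCard A p.1 p.2 c : ℝ)).card : ℝ)
      ≤ ((∑ t ∈ Finset.range m, (S.filter fun s => t < delta A A s).card : ℕ) : ℝ) := by
        exact_mod_cast step1.trans (step2.trans (le_of_eq step3))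
    _ = ∑ t ∈ Finset.range m, ((S.filter fun s => t < delta A A s).card : ℝ) := by
        push_cast; rfl
    _ ≤ ∑ t ∈ Finset.range m, d * (m:ℝ) * (m:ℝ)^2 * ((max k ((t:ℝ)+1))^3)⁻¹ :=
        Finset.sum_le_sum step4
    _ = d * (m:ℝ) * (m:ℝ)^2 * ∑ t ∈ Finset.range m, ((max k ((t:ℝ)+1))^3)⁻¹ := by
        rw [← Finset.mul_sum]
    _ ≤ d * (m:ℝ) * (m:ℝ)^2 * (3/k^2) := by
        apply mul_le_mul_of_nonneg_left sumτ (by positivity)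
    _ = 3 * d * (m:ℝ)^3 / k^2 := by ring
    _ = 3 * d * (n:ℝ) ^ ((3:ℝ)/2) / k^2 := by rw [hn']
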